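/- If L₁ ⊆ Σ* is Parikh-recognizable and L₂ ⊆ Σ^ω is PPBA-recognizable, then L₁L₂ is PPBA-recognizable. -/

import Mathlib

/-- A linear subset of `ℕ^d`: all vectors `b₀ + z₁•b₁ + ... + z_ℓ•b_ℓ`. -/
def IsLinear {d : ℕ} (S : Set (Fin d → ℕ)) : Prop :=
  ∃ (b₀ : Fin d → ℕ) (ℓ : ℕ) (b : Fin ℓ → Fin d → ℕ),
    S = {v | ∃ z : Fin ℓ → ℕ, v = b₀ + ∑ i, z i • b i}

/-- A semi-linear subset of `ℕ^d`: a finite union of linear sets. -/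
def IsSemilinear {d : ℕ} (S : Set (Fin d → ℕ)) : Prop :=
  ∃ (n : ℕ) (T : Fin n → Set (Fin d → ℕ)), (∀ i, IsLinear (T i)) ∧ S = ⋃ i, T i

/-- The number of input-consuming steps among the first `i` steps. -/
def readCount (reads : ℕ → Bool) (i : ℕ) : ℕ :=
  ((Finset.range i).filter (fun j => reads j = true)).card

/-- A run of an ε-free vector-labeled automaton on the infinite word `α`:
`p` is the state sequence, `v i` the vector of the `i`-th transition. -/
def IsRun {Q Sig : Type} {d : ℕ} (q0 : Q) (Δ : Set (Q × Sig × (Fin d → ℕ) × Q))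
    (α : ℕ → Sig) (p : ℕ → Q) (v : ℕ → Fin d → ℕ) : Prop :=
  p 0 = q0 ∧ ∀ i, (p i, α i, v i, p (i + 1)) ∈ Δ

/-- A run of an automaton with ε-transitions `E` on the infinite word `α`;
`reads i = true` iff the `i`-th transition consumes an input symbol, and
infinitely many transitions must consume a symbol. -/
def IsEpsRun {Q Sig : Type} {d : ℕ} (q0 : Q) (Δ : Set (Q × Sig × (Fin d → ℕ) × Q))
    (E : Set (Q × (Fin d → ℕ) × Q)) (α : ℕ → Sig) (p : ℕ → Q) (v : ℕ → Fin d → ℕ)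
    (reads : ℕ → Bool) : Prop :=
  p 0 = q0 ∧ (∀ N, ∃ i, N ≤ i ∧ reads i = true) ∧
    ∀ i, if reads i then (p i, α (readCount reads i), v i, p (i + 1)) ∈ Δ
      else (p i, v i, p (i + 1)) ∈ E

/-- Prefix-acceptance: infinitely many positions `n ≥ 1` where the current state is
accepting and the accumulated vector sum lies in the (state-dependent) semi-linear set. -/
def PrefixCond {Q : Type} {d : ℕ} (F : Set Q) (C : Q → Set (Fin d → ℕ))
    (p : ℕ → Q) (v : ℕ → Fin d → ℕ) : Prop :=
  ∀ N, ∃ n, N ≤ n ∧ 1 ≤ n ∧ p n ∈ F ∧ (∑ j ∈ Finset.range n, v j) ∈ C (p n)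

/-- Weak reset-acceptance: there are infinitely many reset positions `0 = k 0 < k 1 < ...`
such that each `p (k (i+1))` is accepting and the vector sum between consecutive
reset positions lies in the corresponding semi-linear set. -/
def WeakCond {Q : Type} {d : ℕ} (F : Set Q) (C : Q → Set (Fin d → ℕ))
    (p : ℕ → Q) (v : ℕ → Fin d → ℕ) : Prop :=
  ∃ k : ℕ → ℕ, k 0 = 0 ∧ StrictMono k ∧
    ∀ i, p (k (i + 1)) ∈ F ∧
      (∑ j ∈ Finset.Ico (k i) (k (i + 1)), v j) ∈ C (p (k (i + 1)))

/-- Strong reset-acceptance: `k 1 < k 2 < ...` enumerates *all* positions `n ≥ 1` of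
accepting states (so there are infinitely many), and the vector sum between any two
consecutive such positions (with `k 0 = 0`) lies in the corresponding semi-linear set. -/
def StrongCond {Q : Type} {d : ℕ} (F : Set Q) (C : Q → Set (Fin d → ℕ))
    (p : ℕ → Q) (v : ℕ → Fin d → ℕ) : Prop :=
  ∃ k : ℕ → ℕ, k 0 = 0 ∧ StrictMono k ∧
    (∀ n, 1 ≤ n → (p n ∈ F ↔ ∃ i, 1 ≤ i ∧ k i = n)) ∧
    ∀ i, (∑ j ∈ Finset.Ico (k i) (k (i + 1)), v j) ∈ C (p (k (i + 1)))

/-- A Parikh(-Büchi) automaton of dimension `d` (also used as a Parikh automaton on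
finite words): finitely many states, vector-labeled transitions, a semi-linear set `C`. -/
structure PBA (Sig : Type) (d : ℕ) where
  Q : Type
  fin : Fintype Q
  q0 : Q
  Δ : Set (Q × Sig × (Fin d → ℕ) × Q)
  F : Set Q
  C : Set (Fin d → ℕ)

attribute [instance] PBA.fin

/-- `P_ω(A)`: the ω-language recognized under prefix-acceptance (PPBA). -/
def PBA.PrefixLang {Sig d} (A : PBA Sig d) : Set (ℕ → Sig) :=
  {α | ∃ p v, IsRun A.q0 A.Δ α p v ∧ PrefixCond A.F (fun _ => A.C) p v}

/-- `W_ω(A)`: the ω-language recognized under weak reset-acceptance (WPBA). -/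
def PBA.WeakLang {Sig d} (A : PBA Sig d) : Set (ℕ → Sig) :=
  {α | ∃ p v, IsRun A.q0 A.Δ α p v ∧ WeakCond A.F (fun _ => A.C) p v}

/-- `S_ω(A)`: the ω-language recognized under strong reset-acceptance (SPBA). -/
def PBA.StrongLang {Sig d} (A : PBA Sig d) : Set (ℕ → Sig) :=
  {α | ∃ p v, IsRun A.q0 A.Δ α p v ∧ StrongCond A.F (fun _ => A.C) p v}

/-- Acceptance of a finite word by a Parikh automaton. -/
def PBA.FinAccepts {Sig d} (A : PBA Sig d) (w : List Sig) : Prop :=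
  ∃ (p : ℕ → A.Q) (v : ℕ → Fin d → ℕ),
    p 0 = A.q0 ∧ (∀ i : Fin w.length, (p i, w.get i, v i, p (i + 1)) ∈ A.Δ) ∧
    p w.length ∈ A.F ∧ (∑ j ∈ Finset.range w.length, v j) ∈ A.C

/-- `L(A)`: the language of finite words recognized by a Parikh automaton. -/
def PBA.FinLang {Sig d} (A : PBA Sig d) : Set (List Sig) := {w | A.FinAccepts w}

/-- A Parikh-Büchi automaton with ε-transitions. -/
structure EpsPBA (Sig : Type) (d : ℕ) where
  Q : Type
  fin : Fintype Q
  q0 : Q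
  Δ : Set (Q × Sig × (Fin d → ℕ) × Q)
  E : Set (Q × (Fin d → ℕ) × Q)
  F : Set Q
  C : Set (Fin d → ℕ)

attribute [instance] EpsPBA.fin

def EpsPBA.PrefixLang {Sig d} (A : EpsPBA Sig d) : Set (ℕ → Sig) :=
  {α | ∃ p v reads, IsEpsRun A.q0 A.Δ A.E α p v reads ∧ PrefixCond A.F (fun _ => A.C) p v}

def EpsPBA.WeakLang {Sig d} (A : EpsPBA Sig d) : Set (ℕ → Sig) :=
  {α | ∃ p v reads, IsEpsRun A.q0 A.Δ A.E α p v reads ∧ WeakCond A.F (fun _ => A.C) p v}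

def EpsPBA.StrongLang {Sig d} (A : EpsPBA Sig d) : Set (ℕ → Sig) :=
  {α | ∃ p v reads, IsEpsRun A.q0 A.Δ A.E α p v reads ∧ StrongCond A.F (fun _ => A.C) p v}

/-- A Multi-PBA: every (accepting) state carries its own semi-linear set. -/
structure MPBA (Sig : Type) (d : ℕ) where
  Q : Type
  fin : Fintype Q
  q0 : Q
  Δ : Set (Q × Sig × (Fin d → ℕ) × Q)
  F : Set Q
  C : Q → Set (Fin d → ℕ)

attribute [instance] MPBA.fin

def MPBA.PrefixLang {Sig d} (A : MPBA Sig d) : Set (ℕ → Sig) :=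
  {α | ∃ p v, IsRun A.q0 A.Δ α p v ∧ PrefixCond A.F A.C p v}

/-- A Multi-PBA with ε-transitions. -/
structure EpsMPBA (Sig : Type) (d : ℕ) where
  Q : Type
  fin : Fintype Q
  q0 : Q
  Δ : Set (Q × Sig × (Fin d → ℕ) × Q)
  E : Set (Q × (Fin d → ℕ) × Q)
  F : Set Q
  C : Q → Set (Fin d → ℕ)

attribute [instance] EpsMPBA.fin

def EpsMPBA.StrongLang {Sig d} (A : EpsMPBA Sig d) : Set (ℕ → Sig) :=
  {α | ∃ p v reads, IsEpsRun A.q0 A.Δ A.E α p v reads ∧ StrongCond A.F A.C p v}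

/-- A language of finite words is Parikh-recognizable. -/
def ParikhRec {Sig : Type} (L : Set (List Sig)) : Prop :=
  ∃ d, ∃ A : PBA Sig d, IsSemilinear A.C ∧ A.FinLang = L

/-- An ω-language is PPBA-recognizable. -/
def PPBARec {Sig : Type} (L : Set (ℕ → Sig)) : Prop :=
  ∃ d, ∃ A : PBA Sig d, IsSemilinear A.C ∧ A.PrefixLang = L

/-- An ω-language is SPBA-recognizable. -/
def SPBARec {Sig : Type} (L : Set (ℕ → Sig)) : Prop :=
  ∃ d, ∃ A : PBA Sig d, IsSemilinear A.C ∧ A.StrongLang = L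

/-- Concatenation of a language of finite words with an ω-language. -/
def CatLang {Sig : Type} (L₁ : Set (List Sig)) (L₂ : Set (ℕ → Sig)) : Set (ℕ → Sig) :=
  {α | ∃ u ∈ L₁, ∃ β ∈ L₂,
    (∀ i : Fin u.length, α i = u.get i) ∧ ∀ n, β n = α (u.length + n)}

/-- `α` is the concatenation `w 0 ++ w 1 ++ w 2 ++ ⋯` of the finite words `w i`. -/
def IsOmegaConcat {Sig : Type} (w : ℕ → List Sig) (α : ℕ → Sig) : Prop :=
  ∀ n : ℕ, ∀ i : Fin (((List.range n).map w).flatten.length),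
    ((List.range n).map w).flatten.get i = α i

/-- The ω-power `L^ω = {w₁w₂w₃⋯ ∣ w_i ∈ L ∖ {ε}}`. -/
def OmegaPower {Sig : Type} (L : Set (List Sig)) : Set (ℕ → Sig) :=
  {α | ∃ w : ℕ → List Sig, (∀ i, w i ∈ L) ∧ (∀ i, w i ≠ []) ∧ IsOmegaConcat w α}

/-- Kleene star of a set of finite words. -/
def ListStar {Sig : Type} (L : Set (List Sig)) : Set (List Sig) :=
  {w | ∃ ws : List (List Sig), (∀ u ∈ ws, u ∈ L) ∧ w = ws.flatten}

/-- A (nondeterministic) Büchi automaton. -/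
structure BuchiNFA (Sig : Type) where
  Q : Type
  fin : Fintype Q
  q0 : Q
  Δ : Set (Q × Sig × Q)
  F : Set Q

attribute [instance] BuchiNFA.fin

def BuchiNFA.Lang {Sig} (B : BuchiNFA Sig) : Set (ℕ → Sig) :=
  {α | ∃ p : ℕ → B.Q, p 0 = B.q0 ∧ (∀ i, (p i, α i, p (i + 1)) ∈ B.Δ) ∧
    ∀ N, ∃ n, N ≤ n ∧ p n ∈ B.F}

/-- An ω-language is ω-regular if it is recognized by a Büchi automaton. -/
def OmegaRegular {Sig : Type} (R : Set (ℕ → Sig)) : Prop := ∃ B : BuchiNFA Sig, B.Lang = R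

/-- A blind `k`-counter machine: transitions are labeled by a letter or ε (`Option Sig`)
and an integer vector. -/
structure CM (Sig : Type) (k : ℕ) where
  Q : Type
  fin : Fintype Q
  q0 : Q
  Δ : Set (Q × Option Sig × (Fin k → ℤ) × Q)
  F : Set Q

attribute [instance] CM.fin

/-- The ω-language of a blind counter machine: some run reads every symbol of `α`
and is infinitely often in an accepting state with all counters equal to `0`. -/
def CM.Lang {Sig k} (M : CM Sig k) : Set (ℕ → Sig) :=
  {α | ∃ (p : ℕ → M.Q) (v : ℕ → Fin k → ℤ) (reads : ℕ → Bool),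
    p 0 = M.q0 ∧ (∀ N, ∃ i, N ≤ i ∧ reads i = true) ∧
    (∀ i, if reads i then (p i, some (α (readCount reads i)), v i, p (i + 1)) ∈ M.Δ
      else (p i, (none : Option Sig), v i, p (i + 1)) ∈ M.Δ) ∧
    ∀ N, ∃ n, N ≤ n ∧ p n ∈ M.F ∧ (∑ j ∈ Finset.range n, v j) = 0}

namespace PPBAcat

variable {d₁ d₂ : ℕ}

def glue (x : Fin d₁ → ℕ) (y : Fin d₂ → ℕ) : Fin (d₁ + d₂) → ℕ := Fin.addCases x y

@[simp] lemma glue_castAdd (x : Fin d₁ → ℕ) (y : Fin d₂ → ℕ) (i : Fin d₁) :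
    glue x y (Fin.castAdd d₂ i) = x i := Fin.addCases_left i

@[simp] lemma glue_natAdd (x : Fin d₁ → ℕ) (y : Fin d₂ → ℕ) (i : Fin d₂) :
    glue x y (Fin.natAdd d₁ i) = y i := Fin.addCases_right i

lemma glue_eta (w : Fin (d₁ + d₂) → ℕ) :
    glue (fun i => w (Fin.castAdd d₂ i)) (fun i => w (Fin.natAdd d₁ i)) = w := by
  funext i
  induction i using Fin.addCases with
  | left i => simp
  | right i => simp

lemma glue_fst (x : Fin d₁ → ℕ) (y : Fin d₂ → ℕ) :
    (fun i => glue x y (Fin.castAdd d₂ i)) = x := by funext i; simp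

lemma glue_snd (x : Fin d₁ → ℕ) (y : Fin d₂ → ℕ) :
    (fun i => glue x y (Fin.natAdd d₁ i)) = y := by funext i; simp

lemma glue_inj₁ {x x' : Fin d₁ → ℕ} {y y' : Fin d₂ → ℕ} (h : glue x y = glue x' y') :
    x = x' := by rw [← glue_fst x y, h, glue_fst]

lemma glue_inj₂ {x x' : Fin d₁ → ℕ} {y y' : Fin d₂ → ℕ} (h : glue x y = glue x' y') :
    y = y' := by rw [← glue_snd x y, h, glue_snd]

lemma glue_add (x x' : Fin d₁ → ℕ) (y y' : Fin d₂ → ℕ) :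
    glue (x + x') (y + y') = glue x y + glue x' y' := by
  funext i
  induction i using Fin.addCases with
  | left i => simp
  | right i => simp

lemma smul_glue (z : ℕ) (x : Fin d₁ → ℕ) (y : Fin d₂ → ℕ) :
    z • glue x y = glue (z • x) (z • y) := by
  funext i
  induction i using Fin.addCases with
  | left i => simp
  | right i => simp

@[simp] lemma glue_zero : glue (0 : Fin d₁ → ℕ) (0 : Fin d₂ → ℕ) = 0 := by
  funext i
  induction i using Fin.addCases with
  | left i => simp
  | right i => simp

lemma glue_sum {ι : Type*} (s : Finset ι) (x : ι → Fin d₁ → ℕ) (y : ι → Fin d₂ → ℕ) :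
    ∑ j ∈ s, glue (x j) (y j) = glue (∑ j ∈ s, x j) (∑ j ∈ s, y j) := by
  classical
  induction s using Finset.induction_on with
  | empty => simp
  | insert _ _ h ih =>
      rw [Finset.sum_insert h, Finset.sum_insert h, Finset.sum_insert h, ih, glue_add]

def prodSet (C₁ : Set (Fin d₁ → ℕ)) (C₂ : Set (Fin d₂ → ℕ)) : Set (Fin (d₁ + d₂) → ℕ) :=
  {w | ∃ x ∈ C₁, ∃ y ∈ C₂, w = glue x y}

lemma isLinear_prod {C₁ : Set (Fin d₁ → ℕ)} {C₂ : Set (Fin d₂ → ℕ)}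
    (h₁ : IsLinear C₁) (h₂ : IsLinear C₂) : IsLinear (prodSet C₁ C₂) := by
  obtain ⟨a₀, ℓ₁, a, rfl⟩ := h₁
  obtain ⟨b₀, ℓ₂, b, rfl⟩ := h₂
  refine ⟨glue a₀ b₀, ℓ₁ + ℓ₂,
    Fin.addCases (fun i => glue (a i) 0) (fun j => glue 0 (b j)), ?_⟩
  ext w
  simp only [prodSet, Set.mem_setOf_eq]
  constructor
  · rintro ⟨x, ⟨z₁, rfl⟩, y, ⟨z₂, rfl⟩, rfl⟩
    refine ⟨Fin.addCases z₁ z₂, ?_⟩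
    rw [Fin.sum_univ_add]
    simp only [Fin.addCases_left, Fin.addCases_right, smul_glue, smul_zero]
    rw [glue_sum, glue_sum, ← glue_add, ← glue_add]
    simp
  · rintro ⟨z, rfl⟩
    refine ⟨a₀ + ∑ i, z (Fin.castAdd ℓ₂ i) • a i, ⟨_, rfl⟩,
      b₀ + ∑ j, z (Fin.natAdd ℓ₁ j) • b j, ⟨_, rfl⟩, ?_⟩
    rw [Fin.sum_univ_add]
    simp only [Fin.addCases_left, Fin.addCases_right, smul_glue, smul_zero]
    rw [glue_sum, glue_sum, ← glue_add, ← glue_add]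
    simp

lemma isSemilinear_prod {C₁ : Set (Fin d₁ → ℕ)} {C₂ : Set (Fin d₂ → ℕ)}
    (h₁ : IsSemilinear C₁) (h₂ : IsSemilinear C₂) : IsSemilinear (prodSet C₁ C₂) := by
  obtain ⟨n₁, T₁, hT₁, rfl⟩ := h₁
  obtain ⟨n₂, T₂, hT₂, rfl⟩ := h₂
  refine ⟨n₁ * n₂, fun k => prodSet (T₁ (finProdFinEquiv.symm k).1) (T₂ (finProdFinEquiv.symm k).2),
    fun k => isLinear_prod (hT₁ _) (hT₂ _), ?_⟩
  ext w
  simp only [prodSet, Set.mem_setOf_eq, Set.mem_iUnion]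
  constructor
  · rintro ⟨x, ⟨i, hx⟩, y, ⟨j, hy⟩, rfl⟩
    exact ⟨finProdFinEquiv (i, j), x, by simp [hx], y, by simp [hy], rfl⟩
  · rintro ⟨k, x, hx, y, hy, rfl⟩
    exact ⟨x, ⟨_, hx⟩, y, ⟨_, hy⟩, rfl⟩

lemma sum_glue_split (m n : ℕ) (v : ℕ → Fin (d₁ + d₂) → ℕ)
    (x : ℕ → Fin d₁ → ℕ) (y : ℕ → Fin d₂ → ℕ)
    (h1 : ∀ j < m, v j = glue (x j) 0) (h2 : ∀ j, m ≤ j → v j = glue 0 (y (j - m))) :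
    ∑ j ∈ Finset.range (m + n), v j =
      glue (∑ j ∈ Finset.range m, x j) (∑ j ∈ Finset.range n, y j) := by
  induction n with
  | zero =>
      simp only [Nat.add_zero, Finset.range_zero, Finset.sum_empty]
      rw [Finset.sum_congr rfl (fun j hj => h1 j (Finset.mem_range.mp hj)), glue_sum]
      simp
  | succ n ih =>
      rw [← Nat.add_assoc, Finset.sum_range_succ, Finset.sum_range_succ, ih,
        h2 (m + n) (Nat.le_add_right m n), Nat.add_sub_cancel_left, ← glue_add]
      simp


section Given
variable {Sig : Type} {d₁ d₂ : ℕ} (A₁ : PBA Sig d₁) (A₂ : PBA Sig d₂)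

/-- `Rep1 s q`: combined state `s` represents `A₁`-state `q`. -/
def Rep1 (s : Option (A₁.Q ⊕ A₂.Q)) (q : A₁.Q) : Prop :=
  s = some (Sum.inl q) ∨ (s = none ∧ q = A₁.q0)

/-- `Rep2 s q`: combined state `s` represents `A₂`-state `q`. -/
def Rep2 (s : Option (A₁.Q ⊕ A₂.Q)) (q : A₂.Q) : Prop :=
  s = some (Sum.inr q) ∨ (s = none ∧ q = A₂.q0 ∧ A₁.FinAccepts [])

/-- The concatenation automaton. -/
def cat : PBA Sig (d₁ + d₂) where
  Q := Option (A₁.Q ⊕ A₂.Q)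
  fin := inferInstance
  q0 := none
  Δ := {x | (∃ q w q', Rep1 A₁ A₂ x.1 q ∧ (q, x.2.1, w, q') ∈ A₁.Δ ∧ x.2.2.1 = glue w 0 ∧
          (x.2.2.2 = some (Sum.inl q') ∨ (q' ∈ A₁.F ∧ x.2.2.2 = some (Sum.inr A₂.q0)))) ∨
        (∃ q w q', Rep2 A₁ A₂ x.1 q ∧ (q, x.2.1, w, q') ∈ A₂.Δ ∧ x.2.2.1 = glue 0 w ∧
          x.2.2.2 = some (Sum.inr q'))}
  F := {s | ∃ q ∈ A₂.F, s = some (Sum.inr q)}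
  C := prodSet A₁.C A₂.C

lemma cat_sub : CatLang A₁.FinLang A₂.PrefixLang ⊆ (cat A₁ A₂).PrefixLang := by
  rintro α ⟨u, hu, β, ⟨p₂, v₂, ⟨hp₂0, hΔ₂⟩, hPC₂⟩, hα₁, hα₂⟩
  obtain ⟨p₁, v₁, hp₁0, hΔ₁, hF₁, hC₁⟩ := id hu
  set m := u.length with hm
  refine ⟨fun n => if n = 0 then none else if n < m then some (Sum.inl (p₁ n))
      else some (Sum.inr (p₂ (n - m))),
    fun n => if n < m then glue (v₁ n) 0 else glue 0 (v₂ (n - m)), ⟨rfl, ?_⟩, ?_⟩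
  · intro i
    by_cases h2 : i < m
    · -- phase 1 transition (internal or handoff)
      have hget : α i = u.get ⟨i, h2⟩ := hα₁ ⟨i, h2⟩
      have hmem : (p₁ i, α i, v₁ i, p₁ (i + 1)) ∈ A₁.Δ := by
        rw [hget]; exact hΔ₁ ⟨i, h2⟩
      left
      refine ⟨p₁ i, v₁ i, p₁ (i + 1), ?_, hmem, by simp [h2], ?_⟩
      · by_cases h0 : i = 0
        · right; subst h0; exact ⟨by simp, hp₁0⟩
        · left; simp [h0, h2]
      · by_cases h1 : i + 1 < m
        · left; simp [h1]
        · right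
          have : i + 1 = m := by omega
          refine ⟨by rw [← this] at hF₁; exact hF₁, ?_⟩
          simp [this, hp₂0, show m ≠ 0 by omega]
    · -- phase 2 transition
      right
      have hle : m ≤ i := Nat.le_of_not_lt h2
      have hβ : β (i - m) = α i := by rw [hα₂ (i - m), Nat.add_sub_cancel' hle]
      have hmem : (p₂ (i - m), α i, v₂ (i - m), p₂ (i - m + 1)) ∈ A₂.Δ := by
        rw [← hβ]; exact hΔ₂ (i - m)
      refine ⟨p₂ (i - m), v₂ (i - m), p₂ (i - m + 1), ?_, hmem, by simp [h2], ?_⟩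
      · by_cases h0 : i = 0
        · right
          subst h0
          have hm0 : m = 0 := by omega
          refine ⟨by simp, by simp [hm0, hp₂0], ?_⟩
          have hul : u = [] := List.length_eq_zero_iff.mp (by omega)
          exact hul ▸ hu
        · left; simp [h0, h2]
      · have h3 : ¬ (i + 1 < m) := by omega
        have h4 : i + 1 - m = (i - m) + 1 := by omega
        simp [h3, h4]
  · intro N
    obtain ⟨n, hnN, hn1, hnF, hnC⟩ := hPC₂ N
    refine ⟨m + n, by omega, by omega, ?_, ?_⟩
    · refine ⟨p₂ n, hnF, ?_⟩
      have h0 : ¬ (m + n = 0) := by omega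
      have h2 : ¬ (m + n < m) := by omega
      simp [h0, h2, show n ≠ 0 by omega]
    · have hsum : ∑ j ∈ Finset.range (m + n),
          (fun k => if k < m then glue (v₁ k) 0 else glue 0 (v₂ (k - m))) j =
          glue (∑ j ∈ Finset.range m, v₁ j) (∑ j ∈ Finset.range n, v₂ j) := by
        apply sum_glue_split
        · intro j hj; simp [hj]
        · intro j hj; simp [Nat.not_lt.mpr hj]
      rw [hsum]
      exact ⟨_, hC₁, _, hnC, rfl⟩

end Given

section Rev
variable {Sig : Type} {d₁ d₂ : ℕ} (A₁ : PBA Sig d₁) (A₂ : PBA Sig d₂)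
variable {α : ℕ → Sig} {p : ℕ → Option (A₁.Q ⊕ A₂.Q)} {v : ℕ → Fin (d₁ + d₂) → ℕ}

lemma inr_step (hΔ : ∀ i, (p i, α i, v i, p (i + 1)) ∈ (cat A₁ A₂).Δ)
    {n : ℕ} {q : A₂.Q} (hq : p n = some (Sum.inr q)) :
    ∃ w q', (q, α n, w, q') ∈ A₂.Δ ∧ v n = glue 0 w ∧ p (n + 1) = some (Sum.inr q') := by
  rcases hΔ n with ⟨q₁, w, q', hrep, _, _, _⟩ | ⟨q₂, w, q', hrep, hmem, hv, hp'⟩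
  · rcases hrep with h | ⟨h, _⟩ <;> rw [hq] at h <;> simp at h
  · rcases hrep with h | ⟨h, _⟩
    · rw [hq] at h
      obtain rfl : q = q₂ := by simpa using h
      exact ⟨w, q', hmem, hv, hp'⟩
    · rw [hq] at h; simp at h

lemma phase2 (hΔ : ∀ i, (p i, α i, v i, p (i + 1)) ∈ (cat A₁ A₂).Δ)
    (hPC : PrefixCond (cat A₁ A₂).F (fun _ => (cat A₁ A₂).C) p v) (m : ℕ)
    (hpm : p m = none ∨ p m = some (Sum.inr A₂.q0))
    (hstart : ∃ w q', (A₂.q0, α m, w, q') ∈ A₂.Δ ∧ v m = glue 0 w ∧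
      p (m + 1) = some (Sum.inr q'))
    (hafter : ∀ n, m + 1 ≤ n → ∃ q, p n = some (Sum.inr q))
    (hphase1 : ∀ j, j < m → ∃ w, v j = glue w 0) :
    (fun n => α (m + n)) ∈ A₂.PrefixLang ∧
      (∑ j ∈ Finset.range m, (fun i => v j (Fin.castAdd d₂ i))) ∈ A₁.C := by
  classical
  set p₂ : ℕ → A₂.Q := fun j => ((p (m + j)).bind Sum.getRight?).getD A₂.q0 with hp₂def
  set v₂ : ℕ → Fin d₂ → ℕ := fun j k => v (m + j) (Fin.natAdd d₁ k) with hv₂def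
  have hchar : ∀ j q, p (m + j) = some (Sum.inr q) → p₂ j = q := by
    intro j q hq
    show ((p (m + j)).bind Sum.getRight?).getD A₂.q0 = q
    rw [hq]; rfl
  have hp₂ : ∀ j, 1 ≤ j → p (m + j) = some (Sum.inr (p₂ j)) := by
    intro j hj
    obtain ⟨q, hq⟩ := hafter (m + j) (by omega)
    rw [hq, hchar j q hq]
  have hp₂0 : p₂ 0 = A₂.q0 := by
    rcases hpm with h | h
    · show ((p (m + 0)).bind Sum.getRight?).getD A₂.q0 = A₂.q0
      rw [Nat.add_zero, h]; rfl
    · exact hchar 0 _ (by simpa using h)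
  have hstep : ∀ j, (p₂ j, α (m + j), v₂ j, p₂ (j + 1)) ∈ A₂.Δ ∧ v (m + j) = glue 0 (v₂ j) := by
    intro j
    rcases Nat.eq_zero_or_pos j with rfl | hj
    · obtain ⟨w, q', hmem, hv, hnext⟩ := hstart
      have h1 : p₂ 1 = q' := hchar 1 q' hnext
      have hv₂ : v₂ 0 = w := by funext k; show v (m + 0) (Fin.natAdd d₁ k) = w k; rw [Nat.add_zero, hv]; simp
      constructor
      · rw [hp₂0, hv₂, h1, Nat.add_zero]; exact hmem
      · rw [hv₂, Nat.add_zero]; exact hv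
    · obtain ⟨w, q', hmem, hv, hnext⟩ := inr_step A₁ A₂ hΔ (hp₂ j hj)
      have h1 : p₂ (j + 1) = q' := hchar (j + 1) q'
        (by rw [show m + (j + 1) = m + j + 1 by omega]; exact hnext)
      have hv₂ : v₂ j = w := by funext k; show v (m + j) (Fin.natAdd d₁ k) = w k; rw [hv]; simp
      exact ⟨by rw [hv₂, h1]; exact hmem, by rw [hv₂]; exact hv⟩
  have hsum : ∀ n, m ≤ n → ∑ j ∈ Finset.range n, v j =
      glue (∑ j ∈ Finset.range m, (fun i => v j (Fin.castAdd d₂ i)))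
        (∑ j ∈ Finset.range (n - m), v₂ j) := by
    intro n hn
    have hmn : ∑ j ∈ Finset.range n, v j = ∑ j ∈ Finset.range (m + (n - m)), v j := by
      rw [Nat.add_sub_cancel' hn]
    rw [hmn]
    apply sum_glue_split
    · intro j hj
      obtain ⟨w, hw⟩ := hphase1 j hj
      have hxw : (fun i => v j (Fin.castAdd d₂ i)) = w := by funext k; rw [hw]; simp
      rw [hxw, hw]
    · intro j hj
      have := (hstep (j - m)).2
      rwa [Nat.add_sub_cancel' hj] at this
  constructor
  · refine ⟨p₂, v₂, ⟨hp₂0, fun j => (hstep j).1⟩, ?_⟩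
    intro N
    obtain ⟨n, hn₁, hn₂, hnF, hnC⟩ := hPC (m + N + 1)
    obtain ⟨q, hqF, hpq⟩ := hnF
    refine ⟨n - m, by omega, by omega, ?_, ?_⟩
    · have : p₂ (n - m) = q := hchar (n - m) q
        (by rw [Nat.add_sub_cancel' (by omega : m ≤ n)]; exact hpq)
      rw [this]; exact hqF
    · obtain ⟨x', hx', y', hy', heq⟩ := hnC
      have hy : ∑ j ∈ Finset.range (n - m), v₂ j = y' :=
        glue_inj₂ ((hsum n (by omega)).symm.trans heq)
      rw [hy]; exact hy'
  · obtain ⟨n, hn₁, _, _, hnC⟩ := hPC (m + 1)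
    obtain ⟨x', hx', y', hy', heq⟩ := hnC
    have hX := glue_inj₁ ((hsum n (by omega)).symm.trans heq)
    rw [hX]; exact hx'

lemma cat_sup : (cat A₁ A₂).PrefixLang ⊆ CatLang A₁.FinLang A₂.PrefixLang := by
  rintro α ⟨p, v, ⟨hp0, hΔ⟩, hPC⟩
  classical
  have hp0' : p 0 = none := hp0
  have hsome : ∀ n, p (n + 1) ≠ none := by
    intro n hn
    rcases hΔ n with ⟨q, w, q', _, _, _, h⟩ | ⟨q, w, q', _, _, _, h⟩
    · rcases h with h | ⟨_, h⟩ <;> rw [hn] at h <;> simp at h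
    · rw [hn] at h; simp at h
  have hnone0 : ∀ n, p n = none → n = 0 := by
    intro n hn
    by_contra h0
    obtain ⟨k, rfl⟩ : ∃ k, n = k + 1 := ⟨n - 1, by omega⟩
    exact hsome k hn
  have hT : ∃ n, ∃ q, p n = some (Sum.inr q) := by
    obtain ⟨n, _, _, hF, _⟩ := hPC 0
    obtain ⟨q, _, hq⟩ := hF
    exact ⟨n, q, hq⟩
  set t := Nat.find hT with htdef
  obtain ⟨r, hr⟩ : ∃ q, p t = some (Sum.inr q) := Nat.find_spec hT
  have ht1 : 1 ≤ t := by
    rcases Nat.eq_zero_or_pos t with h0 | h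
    · rw [h0, hp0'] at hr; exact absurd hr (by simp)
    · exact h
  have htmin : ∀ n, n < t → ∀ q, p n ≠ some (Sum.inr q) := by
    intro n hn q h
    exact Nat.find_min hT hn ⟨q, h⟩
  have hafter : ∀ n, t ≤ n → ∃ q, p n = some (Sum.inr q) := by
    intro n hn
    induction n, hn using Nat.le_induction with
    | base => exact ⟨r, hr⟩
    | succ n hn ih =>
        obtain ⟨q, hq⟩ := ih
        obtain ⟨w, q', _, _, h⟩ := inr_step A₁ A₂ hΔ hq
        exact ⟨q', h⟩
  have hne_lr : ∀ (a : A₁.Q) (b : A₂.Q),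
      (some (Sum.inl a) : Option (A₁.Q ⊕ A₂.Q)) ≠ some (Sum.inr b) := by
    intro a b h
    injection h with h
    simp at h
  have hbefore : ∀ n, 1 ≤ n → n < t → ∃ q, p n = some (Sum.inl q) := by
    intro n h1 h2
    obtain ⟨k, rfl⟩ : ∃ k, n = k + 1 := ⟨n - 1, by omega⟩
    cases hpn : p (k + 1) with
    | none => exact absurd hpn (hsome k)
    | some s =>
        cases s with
        | inl q => exact ⟨q, rfl⟩
        | inr q => exact absurd hpn (htmin _ h2 q)
  have hΔbelow : ∀ j, j + 1 < t → ∃ q w q', Rep1 A₁ A₂ (p j) q ∧ (q, α j, w, q') ∈ A₁.Δ ∧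
      v j = glue w 0 ∧ p (j + 1) = some (Sum.inl q') := by
    intro j hj
    obtain ⟨q', hq'⟩ := hbefore (j + 1) (by omega) hj
    rcases hΔ j with ⟨q, w, q'', hrep, hmem, hv, htgt⟩ | ⟨q, w, q'', hrep, hmem, hv, htgt⟩
    · rcases htgt with h | ⟨_, h⟩
      · exact ⟨q, w, q'', hrep, hmem, hv, h⟩
      · replace h : p (j + 1) = some (Sum.inr A₂.q0) := h
        exact absurd (hq'.symm.trans h) (hne_lr _ _)
    · replace htgt : p (j + 1) = some (Sum.inr q'') := htgt
      exact absurd (hq'.symm.trans htgt) (hne_lr _ _)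
  obtain ⟨s, hst⟩ : ∃ s, t = s + 1 := ⟨t - 1, by omega⟩
  have hrt : p (s + 1) = some (Sum.inr r) := by rw [← hst]; exact hr
  rcases hΔ s with ⟨q, w, qF, hrep, hmem, hv, htgt⟩ | ⟨q, w, q', hrep, hmem, hv, htgt⟩
  · -- Case A : handoff from phase 1 at step s, u has length t
    replace hrep : Rep1 A₁ A₂ (p s) q := hrep
    replace hmem : (q, α s, w, qF) ∈ A₁.Δ := hmem
    replace hv : v s = glue w 0 := hv
    rcases htgt with h | ⟨hqF, hpt⟩
    · replace h : p (s + 1) = some (Sum.inl qF) := h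
      exact absurd (h.symm.trans hrt) (hne_lr _ _)
    replace hpt : p (s + 1) = some (Sum.inr A₂.q0) := hpt
    have hpmt : p t = some (Sum.inr A₂.q0) := by rw [hst]; exact hpt
    obtain ⟨hβ, hC₁x⟩ := phase2 A₁ A₂ hΔ hPC t (Or.inr hpmt)
      (inr_step A₁ A₂ hΔ hpmt)
      (fun n hn => hafter n (by omega))
      (by
        intro j hj
        rcases Nat.lt_succ_iff_lt_or_eq.mp (hst ▸ hj) with h | rfl
        · obtain ⟨_, w', _, _, _, hv', _⟩ := hΔbelow j (by omega)
          exact ⟨w', hv'⟩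
        · exact ⟨w, hv⟩)
    set p₁ : ℕ → A₁.Q := fun n => if n = 0 then A₁.q0
      else if n < t then ((p n).bind Sum.getLeft?).getD A₁.q0 else qF with hp₁def
    have hchar₁ : ∀ n q, n ≠ 0 → n < t → p n = some (Sum.inl q) → p₁ n = q := by
      intro n q hn hnt hq
      show (if n = 0 then A₁.q0
        else if n < t then ((p n).bind Sum.getLeft?).getD A₁.q0 else qF) = q
      rw [if_neg hn, if_pos hnt, hq]; rfl
    have hrep1_eval : ∀ n q, n < t → Rep1 A₁ A₂ (p n) q → p₁ n = q := by
      intro n q hnt hrep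
      rcases hrep with h | ⟨h, rfl⟩
      · have hn0 : n ≠ 0 := by
          rintro rfl
          rw [hp0'] at h
          simp at h
        exact hchar₁ n q hn0 hnt h
      · have hn0 : n = 0 := hnone0 n h
        subst hn0
        show (if 0 = 0 then A₁.q0
          else if 0 < t then ((p 0).bind Sum.getLeft?).getD A₁.q0 else qF) = A₁.q0
        rw [if_pos rfl]
    have hp₁t : p₁ t = qF := by
      show (if t = 0 then A₁.q0
        else if t < t then ((p t).bind Sum.getLeft?).getD A₁.q0 else qF) = qF
      rw [if_neg (by omega : ¬ t = 0), if_neg (by omega : ¬ t < t)]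
    refine ⟨List.ofFn (fun i : Fin t => α i),
      ⟨p₁, fun j k => v j (Fin.castAdd d₂ k), ?_, ?_, ?_, ?_⟩,
      fun n => α (t + n), hβ, ?_, ?_⟩
    · show (if 0 = 0 then A₁.q0
        else if 0 < t then ((p 0).bind Sum.getLeft?).getD A₁.q0 else qF) = A₁.q0
      rw [if_pos rfl]
    · intro i
      have hit : (i : ℕ) < t := by simpa using i.isLt
      have hget : (List.ofFn (fun i : Fin t => α i)).get i = α i := by
        simp [List.get_ofFn]
      rw [hget]
      by_cases hcase : (i : ℕ) + 1 < t
      · obtain ⟨q', w', q'', hrep', hmem', hv', hnext'⟩ := hΔbelow i hcase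
        have e1 : p₁ i = q' := hrep1_eval i q' hit hrep'
        have e2 : p₁ (↑i + 1) = q'' := hchar₁ _ q'' (by omega) hcase hnext'
        have e3 : ((fun j k => v j (Fin.castAdd d₂ k)) (i : ℕ)) = w' := by
          funext k; show v (i : ℕ) (Fin.castAdd d₂ k) = w' k; rw [hv']; simp
        rw [e1, e2, e3]; exact hmem'
      · have hieq : (i : ℕ) = s := by omega
        have e1 : p₁ i = q := by rw [hieq]; exact hrep1_eval s q (by omega) hrep
        have e2 : p₁ (↑i + 1) = qF := by rw [hieq, ← hst]; exact hp₁t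
        have e3 : ((fun j k => v j (Fin.castAdd d₂ k)) (i : ℕ)) = w := by
          funext k; show v (i : ℕ) (Fin.castAdd d₂ k) = w k; rw [hieq, hv]; simp
        rw [e1, e2, e3, hieq]; exact hmem
    · rw [List.length_ofFn, hp₁t]; exact hqF
    · rw [List.length_ofFn]; exact hC₁x
    · intro i; simp [List.get_ofFn]
    · intro n; rw [List.length_ofFn]
  · -- Case B : empty u, everything is phase 2 from the start
    replace hmem : (q, α s, w, q') ∈ A₂.Δ := hmem
    replace hv : v s = glue 0 w := hv
    replace htgt : p (s + 1) = some (Sum.inr q') := htgt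
    rcases hrep with h | ⟨hnone, hq0, hnil⟩
    · exact absurd h (htmin s (by omega) q)
    · have hs0 : s = 0 := hnone0 s hnone
      subst hs0
      subst hq0
      obtain ⟨hβ, _⟩ := phase2 A₁ A₂ hΔ hPC 0 (Or.inl hp0')
        ⟨w, q', hmem, hv, htgt⟩
        (fun n hn => hafter n (by omega))
        (by intro j hj; omega)
      refine ⟨[], hnil, fun n => α (0 + n), hβ, ?_, ?_⟩
      · intro i; exact i.elim0
      · intro n; simp
end Rev

end PPBAcat

/-- If `L₁` is Parikh-recognizable and `L₂` is PPBA-recognizable, then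
the concatenation `L₁L₂` is PPBA-recognizable. -/
theorem PPBA_closed_cat {Sig : Type} (L₁ : Set (List Sig)) (L₂ : Set (ℕ → Sig))
    (h₁ : ParikhRec L₁) (h₂ : PPBARec L₂) : PPBARec (CatLang L₁ L₂) := by
  obtain ⟨d₁, A₁, hS₁, hL₁⟩ := h₁
  obtain ⟨d₂, A₂, hS₂, hL₂⟩ := h₂
  refine ⟨d₁ + d₂, PPBAcat.cat A₁ A₂, PPBAcat.isSemilinear_prod hS₁ hS₂, ?_⟩
  rw [← hL₁, ← hL₂]
  exact Set.Subset.antisymm (PPBAcat.cat_sup A₁ A₂) (PPBAcat.cat_sub A₁ A₂)
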